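/- arXiv:1010.5206 — 2 statements merged into one kernel-verified Lean document; each statement's English description precedes it below -/
import Mathlib

section
/- For all n ≥ 1, if F is a triangle-free family of subsets of an n-element set X such that every member of F has size at most n−1, then |F| ≤ 2^{n-1} + n − 1; and this bound is sharp, attained by {A ⊆ X : x ∈ A, |A| ≤ n−1} ∪ {A : |A| ≤ 1, x ∉ A} for any x ∈ X. -/
open Finset

/-- A `d`-simplex: `d+1` sets whose total intersection is empty but such that
the intersection of any `d` of them is nonempty. -/
def IsSimplex {α : Type*} [DecidableEq α] (d : ℕ) (A : Fin (d + 1) → Finset α) : Prop :=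
  (⋂ i, (A i : Set α)) = ∅ ∧
    ∀ j : Fin (d + 1), (⋂ i, ⋂ (_ : i ≠ j), (A i : Set α)).Nonempty

/-- A family is `d`-simplex-free if it contains no `d`-simplex. -/
def SimplexFree {α : Type*} [DecidableEq α] (d : ℕ) (F : Finset (Finset α)) : Prop :=
  ¬ ∃ A : Fin (d + 1) → Finset α, (∀ i, A i ∈ F) ∧ IsSimplex d A
lemma simplexFree_mono {α : Type*} [DecidableEq α] {d : ℕ} {F G : Finset (Finset α)}
    (h : G ⊆ F) (hF : SimplexFree d F) : SimplexFree d G := by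
  rintro ⟨A, hA, hS⟩
  exact hF ⟨A, fun i => h (hA i), hS⟩

lemma isSimplex_two {α : Type*} [DecidableEq α] {A B C : Finset α}
    (hAB : (A ∩ B).Nonempty) (hAC : (A ∩ C).Nonempty) (hBC : (B ∩ C).Nonempty)
    (h : A ∩ B ∩ C = ∅) : IsSimplex 2 ![A, B, C] := by
  constructor
  · ext y
    simp only [Set.mem_iInter, Set.mem_empty_iff_false, iff_false]
    intro hy
    have h0 := hy 0
    have h1 := hy 1
    have h2 := hy 2
    simp only [Matrix.cons_val_zero, Matrix.cons_val_one, Matrix.head_cons,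
      Finset.mem_coe] at h0 h1 h2
    have : y ∈ A ∩ B ∩ C := by
      simp only [Finset.mem_inter]
      refine ⟨⟨h0, h1⟩, ?_⟩
      simpa using h2
    rw [h] at this
    exact absurd this (Finset.notMem_empty y)
  · intro j
    fin_cases j
    · obtain ⟨y, hy⟩ := hBC
      rw [Finset.mem_inter] at hy
      refine ⟨y, ?_⟩
      simp only [Set.mem_iInter]
      intro i hi
      fin_cases i
      · exact absurd rfl hi
      · simpa using hy.1
      · simpa using hy.2
    · obtain ⟨y, hy⟩ := hAC
      rw [Finset.mem_inter] at hy
      refine ⟨y, ?_⟩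
      simp only [Set.mem_iInter]
      intro i hi
      fin_cases i
      · simpa using hy.1
      · exact absurd rfl hi
      · simpa using hy.2
    · obtain ⟨y, hy⟩ := hAB
      rw [Finset.mem_inter] at hy
      refine ⟨y, ?_⟩
      simp only [Set.mem_iInter]
      intro i hi
      fin_cases i
      · simpa using hy.1
      · simpa using hy.2
      · exact absurd rfl hi

lemma triangle_helper {α : Type*} [DecidableEq α] {F : Finset (Finset α)}
    (hF : SimplexFree 2 F) {A B C : Finset α} (hA : A ∈ F) (hB : B ∈ F) (hC : C ∈ F)
    (hAB : (A ∩ B).Nonempty) (hAC : (A ∩ C).Nonempty) (hBC : (B ∩ C).Nonempty) :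
    (A ∩ B ∩ C).Nonempty := by
  by_contra h
  rw [Finset.not_nonempty_iff_eq_empty] at h
  exact hF ⟨![A, B, C], by intro i; fin_cases i <;> simpa,
    isSimplex_two hAB hAC hBC h⟩

lemma intersecting_bound {α : Type*} [DecidableEq α] {S : Finset α} {K : Finset (Finset α)}
    (hS : S.Nonempty)
    (hsub : ∀ T ∈ K, T ⊆ S) (hne : ∀ T ∈ K, T.Nonempty) (hproper : ∀ T ∈ K, T ≠ S)
    (hint : ∀ T ∈ K, ∀ U ∈ K, (T ∩ U).Nonempty) :
    K.card + 1 ≤ 2 ^ (S.card - 1) := by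
  classical
  set K' := K.image (S \ ·) with hK'
  have hcardK' : K'.card = K.card := by
    rw [hK']
    apply Finset.card_image_of_injOn
    intro T hT U hU h
    have := congrArg (S \ ·) h
    simpa [Finset.sdiff_sdiff_eq_self (hsub T hT), Finset.sdiff_sdiff_eq_self (hsub U hU)]
      using this
  have hdisj : Disjoint K K' := by
    rw [Finset.disjoint_left]
    intro U hU hU'
    rw [hK', Finset.mem_image] at hU'
    obtain ⟨T, hT, rfl⟩ := hU'
    obtain ⟨z, hz⟩ := hint T hT _ hU
    rw [Finset.mem_inter, Finset.mem_sdiff] at hz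
    exact hz.2.2 hz.1
  have hsubP : K ∪ K' ⊆ (S.powerset.erase S).erase ∅ := by
    intro U hU
    rw [Finset.mem_union] at hU
    rcases hU with hU | hU
    · rw [Finset.mem_erase, Finset.mem_erase, Finset.mem_powerset]
      exact ⟨(hne U hU).ne_empty, hproper U hU, hsub U hU⟩
    · rw [hK', Finset.mem_image] at hU
      obtain ⟨T, hT, rfl⟩ := hU
      rw [Finset.mem_erase, Finset.mem_erase, Finset.mem_powerset]
      refine ⟨?_, ?_, Finset.sdiff_subset⟩
      · intro h
        have hST : S ⊆ T := by
          intro z hz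
          by_contra hzT
          have : z ∈ S \ T := Finset.mem_sdiff.mpr ⟨hz, hzT⟩
          rw [h] at this
          exact absurd this (Finset.notMem_empty z)
        exact hproper T hT (Finset.Subset.antisymm (hsub T hT) hST)
      · intro h
        obtain ⟨z, hz⟩ := hne T hT
        have hzS : z ∈ S := hsub T hT hz
        have : z ∈ S \ T := h.symm ▸ hzS
        exact (Finset.mem_sdiff.mp this).2 hz
  have hcardP : ((S.powerset.erase S).erase ∅).card = 2 ^ S.card - 2 := by
    rw [Finset.card_erase_of_mem, Finset.card_erase_of_mem, Finset.card_powerset]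
    · omega
    · exact Finset.mem_powerset_self S
    · rw [Finset.mem_erase]
      exact ⟨fun h => hS.ne_empty h.symm, Finset.empty_mem_powerset S⟩
  have h2 : K.card + K'.card ≤ 2 ^ S.card - 2 := by
    rw [← Finset.card_union_of_disjoint hdisj, ← hcardP]
    exact Finset.card_le_card hsubP
  have hpow : 2 ^ S.card = 2 * 2 ^ (S.card - 1) := by
    conv_lhs => rw [show S.card = (S.card - 1) + 1 from (Nat.succ_pred_eq_of_pos hS.card_pos).symm]
    ring
  have hpos : 1 ≤ 2 ^ (S.card - 1) := Nat.one_le_two_pow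
  omega

lemma upper {α : Type*} [DecidableEq α] : ∀ n : ℕ, 1 ≤ n → ∀ X : Finset α, X.card = n →
    ∀ F : Finset (Finset α), F ⊆ X.powerset → (∀ A ∈ F, A.card ≤ n - 1) →
    SimplexFree 2 F → F.card ≤ 2 ^ (n - 1) + n - 1 := by
  intro n
  induction n using Nat.strong_induction_on with
  | _ n IH =>
  intro hn X hX F hFP hFc hFS
  rcases Nat.lt_or_ge n 2 with hn2 | hn2
  · -- n = 1
    interval_cases n
    have : F ⊆ {∅} := by
      intro A hA
      have h0 := hFc A hA
      have : A.card = 0 := by omega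
      simp [Finset.card_eq_zero.mp this]
    calc F.card ≤ 1 := by simpa using Finset.card_le_card this
    _ = 2 ^ (1 - 1) + 1 - 1 := by norm_num
  · by_cases hsmall : ∀ A ∈ F, A.card ≤ 1
    · -- all sets small
      have hsub : F ⊆ insert ∅ (X.image (fun a => {a})) := by
        intro A hA
        have hc := hsmall A hA
        rw [Finset.mem_insert]
        rcases Nat.lt_or_ge A.card 1 with h1 | h1
        · left
          rw [← Finset.card_eq_zero]; omega
        · right
          have : A.card = 1 := le_antisymm hc h1
          obtain ⟨a, ha⟩ := Finset.card_eq_one.mp this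
          rw [Finset.mem_image]
          refine ⟨a, ?_, ha.symm⟩
          have : a ∈ A := ha ▸ Finset.mem_singleton_self a
          exact Finset.mem_powerset.mp (hFP hA) this
      have h1 : F.card ≤ 1 + n := by
        have c1 := Finset.card_le_card hsub
        have c2 := Finset.card_insert_le (∅ : Finset α) (X.image (fun a => ({a} : Finset α)))
        have c3 := Finset.card_image_le (s := X) (f := fun a => ({a} : Finset α))
        omega
      have h2 : 2 ≤ 2 ^ (n - 1) := by
        calc 2 = 2 ^ 1 := rfl
        _ ≤ 2 ^ (n - 1) := Nat.pow_le_pow_right (by norm_num) (by omega)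
      omega
    · -- there is a set of size ≥ 2
      push_neg at hsmall
      obtain ⟨A₁, hA₁, hA₁c⟩ := hsmall
      obtain ⟨A₀, hA₀F, hmax⟩ := F.exists_max_image Finset.card ⟨A₁, hA₁⟩
      set m := A₀.card with hm
      have hm2 : 2 ≤ m := le_trans (by omega) (hmax A₁ hA₁)
      have hmn : m ≤ n - 1 := hFc A₀ hA₀F
      have hA₀X : A₀ ⊆ X := Finset.mem_powerset.mp (hFP hA₀F)
      obtain ⟨x, hxX, hxA₀⟩ := Finset.exists_of_ssubset
        (hA₀X.ssubset_of_ne (by intro h; rw [h, hX] at hm; omega))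
      classical
      set G := F.filter (fun A => x ∉ A) with hG
      set H := F.filter (fun A => x ∈ A) with hH
      have hsplit : H.card + G.card = F.card := by
        rw [hH, hG]
        exact Finset.card_filter_add_card_filter_not (fun A => x ∈ A)
      set Y := X.erase x with hY
      have hYc : Y.card = n - 1 := by rw [hY, Finset.card_erase_of_mem hxX, hX]
      -- bound G
      have hGbound : G.card ≤ 2 ^ (n - 2) + n - 2 + 1 := by
        have hG'P : G.erase Y ⊆ Y.powerset := by
          intro A hA
          rw [Finset.mem_erase] at hA
          rw [Finset.mem_powerset, hY]
          have hAG := hA.2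
          rw [hG, Finset.mem_filter] at hAG
          exact Finset.subset_erase.mpr ⟨Finset.mem_powerset.mp (hFP hAG.1), hAG.2⟩
        have hG'c : ∀ A ∈ G.erase Y, A.card ≤ (n - 1) - 1 := by
          intro A hA
          have hAY : A ⊆ Y := Finset.mem_powerset.mp (hG'P hA)
          have hAneY : A ≠ Y := (Finset.mem_erase.mp hA).1
          have := Finset.card_lt_card (hAY.ssubset_of_ne hAneY)
          omega
        have hG'S : SimplexFree 2 (G.erase Y) := by
          apply simplexFree_mono _ hFS
          intro A hA
          have := (Finset.mem_erase.mp hA).2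
          rw [hG, Finset.mem_filter] at this
          exact this.1
        have := IH (n - 1) (by omega) (by omega) Y hYc (G.erase Y) hG'P hG'c hG'S
        have hGsub : G ⊆ insert Y (G.erase Y) := by
          intro A hA
          rw [Finset.mem_insert]
          by_cases hAY : A = Y
          · left; exact hAY
          · right; exact Finset.mem_erase.mpr ⟨hAY, hA⟩
        have := Finset.card_le_card hGsub
        have := Finset.card_insert_le Y (G.erase Y)
        have hj : (2:ℕ) ^ (n - 1 - 1) = 2 ^ (n - 2) := by rw [Nat.sub_sub]
        omega
      -- bound H
      have hHbound : H.card ≤ 2 ^ (n - 2) := by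
        set J := H.image (· ∩ A₀) with hJ
        set R := X \ insert x A₀ with hR
        have hRc : R.card = n - 1 - m := by
          rw [hR, Finset.card_sdiff_of_subset, Finset.card_insert_of_notMem hxA₀, hX, hm]
          · omega
          · exact Finset.insert_subset hxX hA₀X
        -- injection from H into J ×ˢ R.powerset
        have hinj : H.card ≤ (J ×ˢ R.powerset).card := by
          apply Finset.card_le_card_of_injOn (fun B => (B ∩ A₀, B \ insert x A₀))
          · intro B hB
            simp only [Finset.mem_coe] at hB ⊢
            rw [Finset.mem_product]
            constructor
            · exact Finset.mem_image_of_mem _ hB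
            · rw [Finset.mem_powerset, hR]
              have : B ⊆ X := Finset.mem_powerset.mp (hFP (Finset.mem_filter.mp hB).1)
              exact Finset.sdiff_subset_sdiff this (le_refl _)
          · intro B hB C hC h
            simp only [Prod.mk.injEq] at h
            have hxB : x ∈ B := (Finset.mem_filter.mp hB).2
            have hxC : x ∈ C := (Finset.mem_filter.mp hC).2
            ext z
            by_cases hzA : z ∈ A₀
            · constructor
              · intro hzB
                have : z ∈ B ∩ A₀ := Finset.mem_inter.mpr ⟨hzB, hzA⟩
                rw [h.1] at this
                exact (Finset.mem_inter.mp this).1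
              · intro hzC
                have : z ∈ C ∩ A₀ := Finset.mem_inter.mpr ⟨hzC, hzA⟩
                rw [← h.1] at this
                exact (Finset.mem_inter.mp this).1
            · by_cases hzx : z = x
              · subst hzx; simp [hxB, hxC]
              · constructor
                · intro hzB
                  have : z ∈ B \ insert x A₀ := by
                    rw [Finset.mem_sdiff, Finset.mem_insert]
                    exact ⟨hzB, by tauto⟩
                  rw [h.2] at this
                  exact (Finset.mem_sdiff.mp this).1
                · intro hzC
                  have : z ∈ C \ insert x A₀ := by
                    rw [Finset.mem_sdiff, Finset.mem_insert]
                    exact ⟨hzC, by tauto⟩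
                  rw [← h.2] at this
                  exact (Finset.mem_sdiff.mp this).1
        -- bound J
        have hJbound : J.card ≤ 2 ^ (m - 1) := by
          set K := J.erase ∅ with hK
          have hKb : K.card + 1 ≤ 2 ^ (m - 1) := by
            apply intersecting_bound (Finset.card_pos.mp (by omega))
            · intro T hT
              obtain ⟨B, _, rfl⟩ := Finset.mem_image.mp (Finset.mem_erase.mp hT).2
              exact Finset.inter_subset_right
            · intro T hT
              exact Finset.nonempty_of_ne_empty (Finset.mem_erase.mp hT).1
            · intro T hT
              obtain ⟨B, hB, rfl⟩ := Finset.mem_image.mp (Finset.mem_erase.mp hT).2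
              intro hEq
              have hsubB : A₀ ⊆ B := fun z hz =>
                (Finset.mem_inter.mp (show z ∈ B ∩ A₀ by rw [hEq]; exact hz)).1
              have : insert x A₀ ⊆ B := Finset.insert_subset (Finset.mem_filter.mp hB).2 hsubB
              have := Finset.card_le_card this
              rw [Finset.card_insert_of_notMem hxA₀] at this
              have := hmax B (Finset.mem_filter.mp hB).1
              omega
            · intro T hT U hU
              obtain ⟨B, hB, rfl⟩ := Finset.mem_image.mp (Finset.mem_erase.mp hT).2
              obtain ⟨C, hC, rfl⟩ := Finset.mem_image.mp (Finset.mem_erase.mp hU).2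
              have hBF : B ∈ F := (Finset.mem_filter.mp hB).1
              have hCF : C ∈ F := (Finset.mem_filter.mp hC).1
              have h1 : (A₀ ∩ B).Nonempty := by
                rw [Finset.inter_comm]
                exact Finset.nonempty_of_ne_empty (Finset.mem_erase.mp hT).1
              have h2 : (A₀ ∩ C).Nonempty := by
                rw [Finset.inter_comm]
                exact Finset.nonempty_of_ne_empty (Finset.mem_erase.mp hU).1
              have h3 : (B ∩ C).Nonempty :=
                ⟨x, Finset.mem_inter.mpr ⟨(Finset.mem_filter.mp hB).2, (Finset.mem_filter.mp hC).2⟩⟩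
              obtain ⟨z, hz⟩ := triangle_helper hFS hA₀F hBF hCF h1 h2 h3
              refine ⟨z, ?_⟩
              simp only [Finset.mem_inter] at hz ⊢
              tauto
          have : J ⊆ insert ∅ K := by
            intro T hT
            rw [Finset.mem_insert]
            by_cases hTe : T = ∅
            · left; exact hTe
            · right; exact Finset.mem_erase.mpr ⟨hTe, hT⟩
          have := Finset.card_le_card this
          have := Finset.card_insert_le (∅ : Finset α) K
          omega
        calc H.card ≤ (J ×ˢ R.powerset).card := hinj
        _ = J.card * 2 ^ (n - 1 - m) := by
            rw [Finset.card_product, Finset.card_powerset, hRc]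
        _ ≤ 2 ^ (m - 1) * 2 ^ (n - 1 - m) := by
            exact Nat.mul_le_mul_right _ hJbound
        _ = 2 ^ (n - 2) := by
            rw [← pow_add]
            congr 1
            omega
      have hpow : 2 ^ (n - 1) = 2 * 2 ^ (n - 2) := by
        rw [← pow_succ']
        congr 1
        omega
      omega

section constr
variable {α : Type*} [DecidableEq α]

lemma constr_free {n : ℕ} {X : Finset α} {x : α} (hx : x ∈ X) :
    SimplexFree 2 (X.powerset.filter (fun A => x ∈ A ∧ A.card ≤ n - 1) ∪
      X.powerset.filter (fun A => A.card ≤ 1 ∧ x ∉ A)) := by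
  rintro ⟨A, hmem, hempty, hj⟩
  have hpair : ∀ i j : Fin 3, i ≠ j → ∃ z, z ∈ A i ∧ z ∈ A j := by
    have hthird : ∀ i j : Fin 3, i ≠ j → ∃ k : Fin 3, k ≠ i ∧ k ≠ j := by decide
    intro i j hij
    obtain ⟨k, hki, hkj⟩ := hthird i j hij
    obtain ⟨z, hz⟩ := hj k
    simp only [Set.mem_iInter, Finset.mem_coe] at hz
    exact ⟨z, hz i hki.symm, hz j hkj.symm⟩
  have htot : ∀ z : α, ¬ ∀ i, z ∈ A i := by
    intro z hz
    have : z ∈ (⋂ i, (A i : Set α)) := Set.mem_iInter.mpr (fun i => hz i)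
    rw [hempty] at this
    exact this
  by_cases hxall : ∀ i, x ∈ A i
  · exact htot x hxall
  · push_neg at hxall
    obtain ⟨i₀, hi₀⟩ := hxall
    have hAi₀ : (A i₀).card ≤ 1 := by
      have := hmem i₀
      rw [Finset.mem_union, Finset.mem_filter, Finset.mem_filter] at this
      rcases this with h | h
      · exact absurd h.2.1 hi₀
      · exact h.2.1
    obtain ⟨j, hj0⟩ : ∃ j : Fin 3, j ≠ i₀ := by
      have : ∀ i₀ : Fin 3, ∃ j : Fin 3, j ≠ i₀ := by decide
      exact this i₀
    obtain ⟨y, hy, _⟩ := hpair i₀ j hj0.symm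
    apply htot y
    intro i
    by_cases hii : i = i₀
    · rw [hii]; exact hy
    · obtain ⟨w, hw1, hw2⟩ := hpair i₀ i (fun h => hii h.symm)
      have : w = y := by
        have := Finset.card_le_one.mp hAi₀
        exact this w hw1 y hy
      rwa [this] at hw2

lemma constr_card {n : ℕ} (hn : 1 ≤ n) {X : Finset α} (hX : X.card = n) {x : α} (hx : x ∈ X) :
    (X.powerset.filter (fun A => x ∈ A ∧ A.card ≤ n - 1) ∪
      X.powerset.filter (fun A => A.card ≤ 1 ∧ x ∉ A)).card = 2 ^ (n - 1) + n - 1 := by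
  classical
  have hdisj : Disjoint (X.powerset.filter (fun A => x ∈ A ∧ A.card ≤ n - 1))
      (X.powerset.filter (fun A => A.card ≤ 1 ∧ x ∉ A)) := by
    rw [Finset.disjoint_left]
    intro A hA hA'
    exact (Finset.mem_filter.mp hA').2.2 (Finset.mem_filter.mp hA).2.1
  rw [Finset.card_union_of_disjoint hdisj]
  have hfilterx : (X.powerset.filter (fun A => x ∈ A)).card = 2 ^ (n - 1) := by
    have hYc : (X.erase x).card = n - 1 := by rw [Finset.card_erase_of_mem hx, hX]
    rw [← hYc, ← Finset.card_powerset]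
    refine Finset.card_nbij' (fun A => A.erase x) (fun B => insert x B) ?_ ?_ ?_ ?_
    · intro A hA
      simp only [Finset.mem_coe, Finset.mem_filter, Finset.mem_powerset] at hA
      rw [Finset.mem_coe, Finset.mem_powerset]
      exact Finset.erase_subset_erase x hA.1
    · intro B hB
      rw [Finset.mem_coe, Finset.mem_powerset] at hB
      simp only [Finset.mem_coe, Finset.mem_filter, Finset.mem_powerset]
      exact ⟨Finset.insert_subset hx (hB.trans (Finset.erase_subset x X)), Finset.mem_insert_self x B⟩
    · intro A hA
      simp only [Finset.mem_coe, Finset.mem_filter] at hA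
      exact Finset.insert_erase hA.2
    · intro B hB
      rw [Finset.mem_coe, Finset.mem_powerset] at hB
      apply Finset.erase_insert
      intro hxB
      exact (Finset.mem_erase.mp (hB hxB)).1 rfl
  have h1 : (X.powerset.filter (fun A => x ∈ A ∧ A.card ≤ n - 1)).card = 2 ^ (n - 1) - 1 := by
    have heq : X.powerset.filter (fun A => x ∈ A ∧ A.card ≤ n - 1) =
        (X.powerset.filter (fun A => x ∈ A)).erase X := by
      ext A
      rw [Finset.mem_filter, Finset.mem_erase, Finset.mem_filter, Finset.mem_powerset]
      constructor
      · rintro ⟨hAX, hxA, hc⟩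
        refine ⟨?_, hAX, hxA⟩
        intro h
        rw [h, hX] at hc
        omega
      · rintro ⟨hne, hAX, hxA⟩
        refine ⟨hAX, hxA, ?_⟩
        have : A.card < X.card := Finset.card_lt_card (hAX.ssubset_of_ne hne)
        omega
    rw [heq, Finset.card_erase_of_mem, hfilterx]
    rw [Finset.mem_filter, Finset.mem_powerset]
    exact ⟨Finset.Subset.refl X, hx⟩
  have h2 : (X.powerset.filter (fun A => A.card ≤ 1 ∧ x ∉ A)).card = n := by
    have heq : X.powerset.filter (fun A => A.card ≤ 1 ∧ x ∉ A) =
        insert ∅ ((X.erase x).image (fun a => {a})) := by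
      ext A
      rw [Finset.mem_filter, Finset.mem_powerset, Finset.mem_insert, Finset.mem_image]
      constructor
      · rintro ⟨hAX, hc, hxA⟩
        rcases Nat.lt_or_ge A.card 1 with h0 | h0
        · left
          rw [← Finset.card_eq_zero]; omega
        · right
          obtain ⟨a, ha⟩ := Finset.card_eq_one.mp (le_antisymm hc h0)
          have haA : a ∈ A := ha ▸ Finset.mem_singleton_self a
          refine ⟨a, Finset.mem_erase.mpr ⟨?_, hAX haA⟩, ha.symm⟩
          intro h; rw [h] at haA; exact hxA haA
      · rintro (rfl | ⟨a, ha, rfl⟩)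
        · exact ⟨Finset.empty_subset X, by simp⟩
        · rw [Finset.mem_erase] at ha
          refine ⟨Finset.singleton_subset_iff.mpr ha.2, by simp, ?_⟩
          rw [Finset.mem_singleton]
          exact fun h => ha.1 h.symm
    rw [heq, Finset.card_insert_of_notMem, Finset.card_image_of_injective,
      Finset.card_erase_of_mem hx, hX]
    · omega
    · intro a b hab
      simpa using hab
    · rw [Finset.mem_image]
      rintro ⟨a, _, ha⟩
      exact Finset.singleton_ne_empty a ha
  rw [h1, h2]
  have : 1 ≤ 2 ^ (n - 1) := Nat.one_le_two_pow
  omega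

end constr

theorem stmt8 {α : Type*} [DecidableEq α] (n : ℕ) (hn : 1 ≤ n) (X : Finset α)
    (hX : X.card = n) :
    (∀ F : Finset (Finset α), F ⊆ X.powerset → (∀ A ∈ F, A.card ≤ n - 1) →
      SimplexFree 2 F → F.card ≤ 2 ^ (n - 1) + n - 1) ∧
    (∀ x ∈ X,
      let G := X.powerset.filter (fun A => x ∈ A ∧ A.card ≤ n - 1) ∪
        X.powerset.filter (fun A => A.card ≤ 1 ∧ x ∉ A);
      G ⊆ X.powerset ∧ (∀ A ∈ G, A.card ≤ n - 1) ∧ SimplexFree 2 G ∧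
        G.card = 2 ^ (n - 1) + n - 1) := by
  constructor
  · intro F hFP hFc hFS
    exact upper n hn X hX F hFP hFc hFS
  · intro x hx
    refine ⟨Finset.union_subset (Finset.filter_subset _ _) (Finset.filter_subset _ _),
      ?_, constr_free hx, constr_card hn hX hx⟩
    intro A hA
    rw [Finset.mem_union, Finset.mem_filter, Finset.mem_filter] at hA
    rcases hA with h | h
    · exact h.2.2
    · obtain ⟨hAX, hc, hxA⟩ := h
      rw [Finset.mem_powerset] at hAX
      rcases Nat.lt_or_ge n 2 with h2 | h2
      · interval_cases n
        obtain ⟨a, ha⟩ := Finset.card_eq_one.mp hX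
        have hax : a = x := by
          rw [ha, Finset.mem_singleton] at hx
          exact hx.symm
        rw [ha, hax] at hAX
        rcases Finset.subset_singleton_iff.mp hAX with rfl | rfl
        · simp
        · exact absurd (Finset.mem_singleton_self x) hxA
      · omega
end

section
/- For n ≥ 4, the maximum size of a 3-simplex-free family of subsets of an n-element set X all of size at most n−2 is at least 2^{n-1} + C(n−1,2), attained by the family {A ⊆ X : x ∈ A, |A| ≤ n−2} ∪ {A ⊆ X : |A| ≤ 2, x ∉ A} for any fixed x ∈ X. -/
open Finset

lemma card_filter_card_le {α : Type*} [DecidableEq α] (S : Finset α) (k : ℕ) :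
    (S.powerset.filter (fun A => A.card ≤ k)).card = ∑ i ∈ range (k+1), S.card.choose i := by
  have : S.powerset.filter (fun A => A.card ≤ k) = (range (k+1)).biUnion (S.powersetCard ·) := by
    ext A
    simp [mem_powersetCard, Nat.lt_succ_iff, and_comm]
  rw [this, card_biUnion]
  · simp [card_powersetCard]
  · intro i hi j hj hij
    exact Finset.disjoint_left.2 fun A hA hA' => hij (by
      rw [mem_powersetCard] at hA hA'; omega)

theorem stmt15 {α : Type*} [DecidableEq α] (n : ℕ) (hn : 4 ≤ n) (X : Finset α)
    (hX : X.card = n) (x : α) (hx : x ∈ X) :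
    let G := X.powerset.filter (fun A => x ∈ A ∧ A.card ≤ n - 2) ∪
      X.powerset.filter (fun A => A.card ≤ 2 ∧ x ∉ A);
    (∀ A ∈ G, A.card ≤ n - 2) ∧ SimplexFree 3 G ∧
      G.card = 2 ^ (n - 1) + (n - 1).choose 2 := by
  intro G
  have hmem : ∀ A ∈ G, (A ⊆ X ∧ x ∈ A ∧ A.card ≤ n - 2) ∨ (A ⊆ X ∧ A.card ≤ 2 ∧ x ∉ A) := by
    intro A hA
    simp only [G, mem_union, mem_filter, mem_powerset] at hA
    tauto
  refine ⟨?_, ?_, ?_⟩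
  · intro A hA
    rcases hmem A hA with h | h
    · exact h.2.2
    · omega
  · rintro ⟨A, hA, hEmpty, hTrip⟩
    by_cases hall : ∀ i, x ∈ A i
    · have : x ∈ ⋂ i, (A i : Set α) := Set.mem_iInter.2 fun i => by exact_mod_cast hall i
      rw [hEmpty] at this
      exact this
    · push_neg at hall
      obtain ⟨j, hj⟩ := hall
      have hcard : (A j).card ≤ 2 := by
        rcases hmem (A j) (hA j) with h | h
        · exact absurd h.2.1 hj
        · exact h.2.1
      -- for each i, a point in all sets except A i
      have hy : ∀ i, ∀ k, k ≠ i → (hTrip i).choose ∈ A k := by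
        intro i k hk
        have := (hTrip i).choose_spec
        simp only [Set.mem_iInter, mem_coe] at this
        exact this k hk
      have hmaps : ∀ i ∈ (univ : Finset (Fin 4)).erase j, (hTrip i).choose ∈ A j := by
        intro i hi
        exact hy i j (Ne.symm (mem_erase.1 hi).1)
      have hlt : (A j).card < ((univ : Finset (Fin 4)).erase j).card := by
        rw [card_erase_of_mem (mem_univ j), card_univ, Fintype.card_fin]
        omega
      obtain ⟨i1, hi1, i2, hi2, hne, heq⟩ :=
        Finset.exists_ne_map_eq_of_card_lt_of_maps_to hlt hmaps
      have hyall : ∀ k, (hTrip i1).choose ∈ A k := by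
        intro k
        by_cases hk : k = i1
        · subst hk
          rw [heq]
          exact hy i2 k hne
        · exact hy i1 k hk
      have : (hTrip i1).choose ∈ ⋂ i, (A i : Set α) :=
        Set.mem_iInter.2 fun i => by exact_mod_cast hyall i
      rw [hEmpty] at this
      exact this
  · -- counting
    have hxY : x ∉ X.erase x := notMem_erase x X
    have hYcard : (X.erase x).card = n - 1 := by rw [card_erase_of_mem hx, hX]
    have h1 : X.powerset.filter (fun A => x ∈ A ∧ A.card ≤ n - 2) =
        ((X.erase x).powerset.filter (fun B => B.card ≤ n - 3)).image (insert x) := by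
      ext A
      simp only [mem_filter, mem_powerset, mem_image]
      constructor
      · rintro ⟨hAX, hxA, hc⟩
        refine ⟨A.erase x, ⟨erase_subset_erase x hAX, ?_⟩, insert_erase hxA⟩
        rw [card_erase_of_mem hxA]
        omega
      · rintro ⟨B, ⟨hBX, hBc⟩, rfl⟩
        have hxB : x ∉ B := fun h => hxY (hBX h)
        refine ⟨insert_subset hx (hBX.trans (erase_subset x X)), mem_insert_self x B, ?_⟩
        rw [card_insert_of_notMem hxB]
        omega
    have h2 : X.powerset.filter (fun A => A.card ≤ 2 ∧ x ∉ A) =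
        (X.erase x).powerset.filter (fun B => B.card ≤ 2) := by
      ext A
      simp only [mem_filter, mem_powerset, subset_erase]
      tauto
    have hdisj : Disjoint (X.powerset.filter (fun A => x ∈ A ∧ A.card ≤ n - 2))
        (X.powerset.filter (fun A => A.card ≤ 2 ∧ x ∉ A)) := by
      refine Finset.disjoint_left.2 fun A hA hA' => ?_
      simp only [mem_filter] at hA hA'
      exact hA'.2.2 hA.2.1
    have hcard1 : (X.powerset.filter (fun A => x ∈ A ∧ A.card ≤ n - 2)).card =
        ∑ i ∈ range (n - 3 + 1), (n - 1).choose i := by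
      rw [h1, card_image_of_injOn, card_filter_card_le, hYcard]
      intro B hB C hC hBC
      simp only [coe_filter, Set.mem_setOf_eq, mem_powerset] at hB hC
      have hxB : x ∉ B := fun h => hxY (hB.1 h)
      have hxC : x ∉ C := fun h => hxY (hC.1 h)
      rw [← erase_insert hxB, ← erase_insert hxC, hBC]
    have hcard2 : (X.powerset.filter (fun A => A.card ≤ 2 ∧ x ∉ A)).card =
        ∑ i ∈ range 3, (n - 1).choose i := by
      rw [h2, card_filter_card_le, hYcard]
    have hsum : ∑ i ∈ range ((n - 1) + 1), (n - 1).choose i = 2 ^ (n - 1) :=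
      Nat.sum_range_choose (n - 1)
    have hsplit : ∑ i ∈ range ((n - 1) + 1), (n - 1).choose i =
        ∑ i ∈ range (n - 3 + 1), (n - 1).choose i + (n - 1).choose (n - 2) + (n - 1).choose (n - 1) := by
      have e1 : (n - 1) + 1 = (n - 3 + 1) + 1 + 1 := by omega
      have e2 : n - 3 + 1 + 1 = n - 1 := by omega
      have e3 : n - 3 + 1 = n - 2 := by omega
      rw [e1, Finset.sum_range_succ, Finset.sum_range_succ, e2, e3]
    have hch1 : (n - 1).choose (n - 2) = n - 1 := by
      have : n - 1 = (n - 2) + 1 := by omega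
      rw [this, Nat.choose_succ_self_right]
    have hch2 : (n - 1).choose (n - 1) = 1 := Nat.choose_self _
    have hpow : n ≤ 2 ^ (n - 1) := by
      have := Nat.lt_two_pow_self (n := n - 1)
      omega
    have hr3 : ∑ i ∈ range 3, (n - 1).choose i = 1 + (n - 1) + (n - 1).choose 2 := by
      simp [Finset.sum_range_succ]
    rw [show G.card = _ + _ from card_union_of_disjoint hdisj, hcard1, hcard2]
    omega
end
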